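/- (Cauchy's interlacing property.) Let N ≥ 2, let A be an N×N real symmetric matrix, and let B be the top-left (N−1)×(N−1) principal submatrix of A. If λ_1 ≤ λ_2 ≤ ⋯ ≤ λ_N are the eigenvalues of A and λ'_1 ≤ λ'_2 ≤ ⋯ ≤ λ'_{N−1} are the eigenvalues of B, each listed with multiplicity, then λ_i ≤ λ'_i ≤ λ_{i+1} for every 1 ≤ i ≤ N−1. -/

import Mathlib

open Matrix Submodule Finset Module

noncomputable section

namespace CauchyAux
variable {m : ℕ}

lemma inner_eq_dot (x y : EuclideanSpace ℝ (Fin m)) :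
    (inner ℝ x y : ℝ) = (x : Fin m → ℝ) ⬝ᵥ (y : Fin m → ℝ) := by
  simp [PiLp.inner_apply, dotProduct, RCLike.inner_apply, mul_comm]

lemma repr_eq_zero_of_mem_span (u : OrthonormalBasis (Fin m) ℝ (EuclideanSpace ℝ (Fin m)))
    (S : Set (Fin m)) {x : EuclideanSpace ℝ (Fin m)} (hx : x ∈ span ℝ (⇑u '' S))
    {j : Fin m} (hj : j ∉ S) : u.repr x j = 0 := by
  induction hx using Submodule.span_induction with
  | mem y hy =>
      obtain ⟨k, hk, rfl⟩ := hy
      have hjk : j ≠ k := fun h => hj (h ▸ hk)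
      simp [u.repr_self, EuclideanSpace.single_apply, hjk]
  | zero => simp
  | add y z _ _ hy hz => simp [hy, hz]
  | smul c y _ hy => simp [hy]

lemma mulVec_expand (A : Matrix (Fin m) (Fin m) ℝ)
    (u : OrthonormalBasis (Fin m) ℝ (EuclideanSpace ℝ (Fin m))) (ν : Fin m → ℝ)
    (hu : ∀ j, A *ᵥ (u j) = ν j • (u j : Fin m → ℝ)) (x : EuclideanSpace ℝ (Fin m)) :
    (A *ᵥ x : Fin m → ℝ) = ∑ j, (ν j * u.repr x j) • (u j : Fin m → ℝ) := by
  conv_lhs => rw [← u.sum_repr x]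
  simp only [WithLp.ofLp_sum, WithLp.ofLp_smul]
  have : A *ᵥ (∑ j, u.repr x j • (u j : EuclideanSpace ℝ (Fin m)) : Fin m → ℝ)
      = ∑ j, u.repr x j • (A *ᵥ (u j)) := by
    rw [show (∑ j, u.repr x j • (u j : EuclideanSpace ℝ (Fin m)) : Fin m → ℝ)
        = ∑ j, u.repr x j • (u j : Fin m → ℝ) from rfl]
    rw [← A.mulVecLin_apply, map_sum]
    simp [Matrix.mulVecLin_apply]
  rw [this]
  refine Finset.sum_congr rfl fun j _ => ?_
  rw [hu j, smul_smul, mul_comm]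

lemma inner_mulVec_eq (A : Matrix (Fin m) (Fin m) ℝ)
    (u : OrthonormalBasis (Fin m) ℝ (EuclideanSpace ℝ (Fin m))) (ν : Fin m → ℝ)
    (hu : ∀ j, A *ᵥ (u j) = ν j • (u j : Fin m → ℝ)) (x : EuclideanSpace ℝ (Fin m)) :
    (inner ℝ x (WithLp.toLp 2 (A *ᵥ x : Fin m → ℝ)) : ℝ)
      = ∑ j, ν j * (u.repr x j) ^ 2 := by
  have h : (WithLp.toLp 2 (A *ᵥ x : Fin m → ℝ))
      = ∑ j, (ν j * u.repr x j) • (u j : EuclideanSpace ℝ (Fin m)) := by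
    apply WithLp.ofLp_injective 2
    rw [WithLp.ofLp_toLp, mulVec_expand A u ν hu x, WithLp.ofLp_sum]
    simp only [WithLp.ofLp_smul]
  rw [h, inner_sum]
  refine Finset.sum_congr rfl fun j _ => ?_
  rw [real_inner_smul_right, real_inner_comm, ← u.repr_apply_apply]
  ring

lemma inner_self_eq (u : OrthonormalBasis (Fin m) ℝ (EuclideanSpace ℝ (Fin m)))
    (x : EuclideanSpace ℝ (Fin m)) :
    (inner ℝ x x : ℝ) = ∑ j, (u.repr x j) ^ 2 := by
  conv_lhs => rw [← u.sum_repr x]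
  rw [inner_sum]
  refine Finset.sum_congr rfl fun j _ => ?_
  rw [real_inner_smul_right]
  nth_rewrite 1 [← u.sum_repr x]
  rw [real_inner_comm, ← u.repr_apply_apply]
  simp [u.sum_repr x]
  ring

lemma sum_le_quad (ν : Fin m → ℝ) (c : ℝ) (f : Fin m → ℝ) (S : Finset (Fin m))
    (hb : ∀ j ∈ S, c ≤ ν j) (hf : ∀ j ∉ S, f j = 0) :
    c * ∑ j, (f j) ^ 2 ≤ ∑ j, ν j * (f j) ^ 2 := by
  rw [Finset.mul_sum]
  refine Finset.sum_le_sum fun j _ => ?_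
  by_cases hj : j ∈ S
  · exact mul_le_mul_of_nonneg_right (hb j hj) (sq_nonneg _)
  · simp [hf j hj]

lemma quad_le_sum (ν : Fin m → ℝ) (c : ℝ) (f : Fin m → ℝ) (S : Finset (Fin m))
    (hb : ∀ j ∈ S, ν j ≤ c) (hf : ∀ j ∉ S, f j = 0) :
    ∑ j, ν j * (f j) ^ 2 ≤ c * ∑ j, (f j) ^ 2 := by
  rw [Finset.mul_sum]
  refine Finset.sum_le_sum fun j _ => ?_
  by_cases hj : j ∈ S
  · exact mul_le_mul_of_nonneg_right (hb j hj) (sq_nonneg _)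
  · simp [hf j hj]

lemma finrank_span_image {V : Type*} [AddCommGroup V] [Module ℝ V] {k : ℕ}
    (w : Fin k → V) (hw : LinearIndependent ℝ w) (S : Finset (Fin k)) :
    finrank ℝ (span ℝ (w '' ↑S)) = S.card := by
  have h1 : LinearIndependent ℝ (w ∘ (Subtype.val : ↥(↑S : Set (Fin k)) → Fin k)) :=
    hw.comp _ Subtype.val_injective
  have h2 := finrank_span_eq_card h1
  rw [Set.range_comp, Subtype.range_val] at h2
  rw [h2]
  simp

lemma exists_ne_zero_mem_inf {V : Type*} [AddCommGroup V] [Module ℝ V] [FiniteDimensional ℝ V]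
    (W₁ W₂ : Submodule ℝ V) (h : finrank ℝ V < finrank ℝ W₁ + finrank ℝ W₂) :
    ∃ x : V, x ≠ 0 ∧ x ∈ W₁ ∧ x ∈ W₂ := by
  have h2 := Submodule.finrank_sup_add_finrank_inf_eq W₁ W₂
  have h3 : finrank ℝ ↥(W₁ ⊔ W₂) ≤ finrank ℝ V := Submodule.finrank_le _
  have h4 : W₁ ⊓ W₂ ≠ ⊥ := by
    intro hbot
    rw [hbot, finrank_bot] at h2
    omega
  obtain ⟨x, hx, hx0⟩ := Submodule.exists_mem_ne_zero_of_ne_bot h4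
  exact ⟨x, hx0, (Submodule.mem_inf.mp hx).1, (Submodule.mem_inf.mp hx).2⟩

def emb (m : ℕ) : EuclideanSpace ℝ (Fin m) →ₗ[ℝ] EuclideanSpace ℝ (Fin (m + 1)) where
  toFun y := WithLp.toLp 2 (Fin.snoc (y : Fin m → ℝ) 0 : Fin (m + 1) → ℝ)
  map_add' y z := by
    refine PiLp.ext fun j => ?_
    refine Fin.lastCases ?_ (fun k => ?_) j <;>
      simp [Fin.snoc_last, Fin.snoc_castSucc, PiLp.add_apply]
  map_smul' c y := by
    refine PiLp.ext fun j => ?_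
    refine Fin.lastCases ?_ (fun k => ?_) j <;>
      simp [Fin.snoc_last, Fin.snoc_castSucc, PiLp.smul_apply]

@[simp] lemma emb_castSucc (y : EuclideanSpace ℝ (Fin m)) (k : Fin m) :
    emb m y k.castSucc = y k := by
  show (Fin.snoc (y : Fin m → ℝ) 0 : Fin (m+1) → ℝ) k.castSucc = y k
  simp

@[simp] lemma emb_last (y : EuclideanSpace ℝ (Fin m)) :
    emb m y (Fin.last m) = 0 := by
  show (Fin.snoc (y : Fin m → ℝ) 0 : Fin (m+1) → ℝ) (Fin.last m) = 0
  simp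

lemma emb_injective : Function.Injective (emb m) := by
  intro y z h
  refine PiLp.ext fun k => ?_
  have := congrFun (congrArg (fun f : EuclideanSpace ℝ (Fin (m+1)) => (f : Fin (m+1) → ℝ)) h)
    k.castSucc
  simpa using this

lemma emb_inner (y z : EuclideanSpace ℝ (Fin m)) :
    (inner ℝ (emb m y) (emb m z) : ℝ) = inner ℝ y z := by
  simp [PiLp.inner_apply, Fin.sum_univ_castSucc]

lemma emb_quad (A : Matrix (Fin (m + 1)) (Fin (m + 1)) ℝ) (y : EuclideanSpace ℝ (Fin m)) :
    ((emb m y : Fin (m+1) → ℝ) ⬝ᵥ (A *ᵥ (emb m y : Fin (m+1) → ℝ)))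
      = (y : Fin m → ℝ) ⬝ᵥ ((A.submatrix Fin.castSucc Fin.castSucc) *ᵥ (y : Fin m → ℝ)) := by
  simp [dotProduct, mulVec, Fin.sum_univ_castSucc]

end CauchyAux

open CauchyAux

/-- Cauchy's interlacing property: if `A` is an `(n+1) × (n+1)` real symmetric matrix,
`B` is its top-left `n × n` principal submatrix, `μ` (resp. `μ'`) lists the eigenvalues
of `A` (resp. `B`) with multiplicity in nondecreasing order, then
`μ i ≤ μ' i ≤ μ (i+1)` for every `i`. -/
theorem cauchy_interlacing
    (n : ℕ) (hn : 1 ≤ n)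
    (A : Matrix (Fin (n + 1)) (Fin (n + 1)) ℝ) (hA : A.IsHermitian)
    (B : Matrix (Fin n) (Fin n) ℝ)
    (hAB : B = A.submatrix Fin.castSucc Fin.castSucc)
    (hB : B.IsHermitian)
    (μ : Fin (n + 1) → ℝ) (hμmono : Monotone μ)
    (hμ : ∃ σ : Equiv.Perm (Fin (n + 1)), μ = hA.eigenvalues ∘ σ)
    (μ' : Fin n → ℝ) (hμ'mono : Monotone μ')
    (hμ' : ∃ τ : Equiv.Perm (Fin n), μ' = hB.eigenvalues ∘ τ) :
    ∀ i : Fin n, μ i.castSucc ≤ μ' i ∧ μ' i ≤ μ i.succ := by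
  obtain ⟨σ, hσ⟩ := hμ
  obtain ⟨τ, hτ⟩ := hμ'
  -- eigenbases adapted to the sorted eigenvalue lists
  set u : OrthonormalBasis (Fin (n + 1)) ℝ (EuclideanSpace ℝ (Fin (n + 1))) :=
    hA.eigenvectorBasis.reindex σ.symm with hu_def
  set v : OrthonormalBasis (Fin n) ℝ (EuclideanSpace ℝ (Fin n)) :=
    hB.eigenvectorBasis.reindex τ.symm with hv_def
  have hu : ∀ j, A *ᵥ (u j) = μ j • (u j : Fin (n + 1) → ℝ) := by
    intro j
    have h1 : u j = hA.eigenvectorBasis (σ j) := by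
      rw [hu_def, OrthonormalBasis.reindex_apply]; simp
    rw [h1, hσ]
    exact hA.mulVec_eigenvectorBasis (σ j)
  have hv : ∀ j, B *ᵥ (v j) = μ' j • (v j : Fin n → ℝ) := by
    intro j
    have h1 : v j = hB.eigenvectorBasis (τ j) := by
      rw [hv_def, OrthonormalBasis.reindex_apply]; simp
    rw [h1, hτ]
    exact hB.mulVec_eigenvectorBasis (τ j)
  -- the embedded eigenvectors of B
  set w : Fin n → EuclideanSpace ℝ (Fin (n + 1)) := fun j => emb n (v j) with hw_def
  have hw : LinearIndependent ℝ w := by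
    have h1 : LinearIndependent ℝ (⇑v) := v.orthonormal.linearIndependent
    have h2 := LinearIndependent.map' h1 (emb n) (LinearMap.ker_eq_bot.mpr emb_injective)
    exact h2
  have hwimg : ∀ S : Finset (Fin n), w '' ↑S = ⇑(emb n) '' (⇑v '' ↑S) := by
    intro S
    rw [hw_def, ← Set.image_comp]
    rfl
  have hrank : finrank ℝ (EuclideanSpace ℝ (Fin (n + 1))) = n + 1 := by
    simp [finrank_euclideanSpace]
  intro i
  have hin : (i : ℕ) < n := i.isLt
  constructor
  · -- μ i.castSucc ≤ μ' i
    set Shi : Finset (Fin (n + 1)) := Finset.Ici i.castSucc with hShi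
    set Slo : Finset (Fin n) := Finset.Iic i with hSlo
    have hcard1 : finrank ℝ (span ℝ (⇑u '' ↑Shi)) = (n + 1) - (i : ℕ) := by
      rw [finrank_span_image _ u.orthonormal.linearIndependent, hShi, Fin.card_Ici]
      simp
    have hcard2 : finrank ℝ (span ℝ (w '' ↑Slo)) = (i : ℕ) + 1 := by
      rw [finrank_span_image _ hw, hSlo, Fin.card_Iic]
    obtain ⟨x, hx0, hxV, hxW⟩ := exists_ne_zero_mem_inf
      (span ℝ (⇑u '' ↑Shi)) (span ℝ (w '' ↑Slo)) (by rw [hrank, hcard1, hcard2]; omega)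
    rw [hwimg, ← Submodule.map_span] at hxW
    obtain ⟨y, hy, rfl⟩ := hxW
    have hxx : (0 : ℝ) < inner ℝ (emb n y) (emb n y) := by
      have hne : (inner ℝ (emb n y) (emb n y) : ℝ) ≠ 0 := fun h => hx0 (inner_self_eq_zero.mp h)
      exact lt_of_le_of_ne real_inner_self_nonneg (Ne.symm hne)
    have lower : μ i.castSucc * (inner ℝ (emb n y) (emb n y) : ℝ)
        ≤ (inner ℝ (emb n y) (WithLp.toLp 2 (A *ᵥ (emb n y : Fin (n+1) → ℝ) : Fin (n+1) → ℝ)) : ℝ) := by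
      rw [inner_mulVec_eq A u μ hu, inner_self_eq u]
      exact sum_le_quad μ _ _ Shi (fun j hj => hμmono (Finset.mem_Ici.mp hj))
        (fun j hj => repr_eq_zero_of_mem_span u ↑Shi hxV (by simpa using hj))
    have quadeq : (inner ℝ (emb n y) (WithLp.toLp 2 (A *ᵥ (emb n y : Fin (n+1) → ℝ) : Fin (n+1) → ℝ)) : ℝ)
        = (inner ℝ y (WithLp.toLp 2 (B *ᵥ (y : Fin n → ℝ) : Fin n → ℝ)) : ℝ) := by
      rw [inner_eq_dot, inner_eq_dot, hAB]
      exact emb_quad A y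
    have upper : (inner ℝ y (WithLp.toLp 2 (B *ᵥ (y : Fin n → ℝ) : Fin n → ℝ)) : ℝ)
        ≤ μ' i * (inner ℝ y y : ℝ) := by
      rw [inner_mulVec_eq B v μ' hv, inner_self_eq v]
      exact quad_le_sum μ' _ _ Slo (fun j hj => hμ'mono (Finset.mem_Iic.mp hj))
        (fun j hj => repr_eq_zero_of_mem_span v ↑Slo hy (by simpa using hj))
    have hinn : (inner ℝ y y : ℝ) = inner ℝ (emb n y) (emb n y) := (emb_inner y y).symm
    rw [hinn] at upper
    nlinarith [lower, upper, quadeq, hxx]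
  · -- μ' i ≤ μ i.succ
    set Shi : Finset (Fin (n + 1)) := Finset.Iic i.succ with hShi
    set Slo : Finset (Fin n) := Finset.Ici i with hSlo
    have hcard1 : finrank ℝ (span ℝ (⇑u '' ↑Shi)) = (i : ℕ) + 2 := by
      rw [finrank_span_image _ u.orthonormal.linearIndependent, hShi, Fin.card_Iic]
      simp
    have hcard2 : finrank ℝ (span ℝ (w '' ↑Slo)) = n - (i : ℕ) := by
      rw [finrank_span_image _ hw, hSlo, Fin.card_Ici]
    obtain ⟨x, hx0, hxV, hxW⟩ := exists_ne_zero_mem_inf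
      (span ℝ (⇑u '' ↑Shi)) (span ℝ (w '' ↑Slo)) (by rw [hrank, hcard1, hcard2]; omega)
    rw [hwimg, ← Submodule.map_span] at hxW
    obtain ⟨y, hy, rfl⟩ := hxW
    have hxx : (0 : ℝ) < inner ℝ (emb n y) (emb n y) := by
      have hne : (inner ℝ (emb n y) (emb n y) : ℝ) ≠ 0 := fun h => hx0 (inner_self_eq_zero.mp h)
      exact lt_of_le_of_ne real_inner_self_nonneg (Ne.symm hne)
    have upper : (inner ℝ (emb n y) (WithLp.toLp 2 (A *ᵥ (emb n y : Fin (n+1) → ℝ) : Fin (n+1) → ℝ)) : ℝ)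
        ≤ μ i.succ * (inner ℝ (emb n y) (emb n y) : ℝ) := by
      rw [inner_mulVec_eq A u μ hu, inner_self_eq u]
      exact quad_le_sum μ _ _ Shi (fun j hj => hμmono (Finset.mem_Iic.mp hj))
        (fun j hj => repr_eq_zero_of_mem_span u ↑Shi hxV (by simpa using hj))
    have quadeq : (inner ℝ (emb n y) (WithLp.toLp 2 (A *ᵥ (emb n y : Fin (n+1) → ℝ) : Fin (n+1) → ℝ)) : ℝ)
        = (inner ℝ y (WithLp.toLp 2 (B *ᵥ (y : Fin n → ℝ) : Fin n → ℝ)) : ℝ) := by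
      rw [inner_eq_dot, inner_eq_dot, hAB]
      exact emb_quad A y
    have lower : μ' i * (inner ℝ y y : ℝ)
        ≤ (inner ℝ y (WithLp.toLp 2 (B *ᵥ (y : Fin n → ℝ) : Fin n → ℝ)) : ℝ) := by
      rw [inner_mulVec_eq B v μ' hv, inner_self_eq v]
      exact sum_le_quad μ' _ _ Slo (fun j hj => hμ'mono (Finset.mem_Ici.mp hj))
        (fun j hj => repr_eq_zero_of_mem_span v ↑Slo hy (by simpa using hj))
    have hinn : (inner ℝ y y : ℝ) = inner ℝ (emb n y) (emb n y) := (emb_inner y y).symm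
    rw [hinn] at lower
    nlinarith [lower, upper, quadeq, hxx]

end
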